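/- Let 0 < α < 1, λ ∈ ℝ, τ > 0, and (v^k)_{k≥0} a real sequence with v^{-1} = 0. Then for every n ≥ 1: v^n · δ_t^{α,λ} v^n ≥ (1/2) e^{-(α/2)λτ} δ_t^{α,2λ}(v^n)² + (e^{-(α/2)λτ}/(2 l_0^α)) τ^α (δ_t^{α,λ} v^n)², where δ_t^{α,λ} v^n = τ^{-α} ∑_{k=0}^n e^{-(k-α/2)λτ} g_k^α v^{n-k} and δ_t^{α,2λ}(v^n)² = τ^{-α} ∑_{k=0}^n e^{-(k-α/2)·2λτ} g_k^α (v^{n-k})². -/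

import Mathlib

noncomputable def binom (α : ℝ) (k : ℕ) : ℝ :=
  (∏ i ∈ Finset.range k, (α - i)) / (Nat.factorial k)

noncomputable def g (α : ℝ) (k : ℕ) : ℝ := (-1) ^ k * binom α k

noncomputable def lcoef (α : ℝ) (n : ℕ) : ℝ := ∑ j ∈ Finset.range (n + 1), g α j

/-- `δ_t^{α,λ} v^n = τ^{-α} ∑_{k=0}^n e^{-(k-α/2)λτ} g_k^α v^{n-k}`. -/
noncomputable def delta (α lam τ : ℝ) (v : ℕ → ℝ) (n : ℕ) : ℝ :=
  τ ^ (-α) * ∑ k ∈ Finset.range (n + 1),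
    Real.exp (-((k : ℝ) - α / 2) * lam * τ) * g α k * v (n - k)

lemma g_succ (α : ℝ) (k : ℕ) :
    g α (k + 1) = -(α * ∏ i ∈ Finset.range k, ((i : ℝ) + 1 - α)) / (k + 1).factorial := by
  have h : ∏ i ∈ Finset.range k, ((i : ℝ) + 1 - α)
      = (-1) ^ k * ∏ i ∈ Finset.range k, (α - ((i : ℝ) + 1)) := by
    rw [show ((-1 : ℝ)) ^ k = ∏ _i ∈ Finset.range k, (-1 : ℝ) from by simp,
      ← Finset.prod_mul_distrib]
    exact Finset.prod_congr rfl fun i _ => by ring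
  unfold g binom
  rw [Finset.prod_range_succ', h]
  push_cast
  field_simp
  ring

lemma g_zero (α : ℝ) : g α 0 = 1 := by simp [g, binom]

lemma prod_nonneg_aux {α : ℝ} (hα1 : α < 1) (k : ℕ) :
    0 ≤ ∏ i ∈ Finset.range k, ((i : ℝ) + 1 - α) :=
  Finset.prod_nonneg fun i _ => by
    have : (0:ℝ) ≤ i := Nat.cast_nonneg i
    linarith

lemma g_succ_nonpos {α : ℝ} (hα0 : 0 < α) (hα1 : α < 1) (k : ℕ) : g α (k + 1) ≤ 0 := by
  rw [g_succ]
  apply div_nonpos_of_nonpos_of_nonneg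
  · have := prod_nonneg_aux hα1 k
    nlinarith
  · positivity

lemma lcoef_eq (α : ℝ) (n : ℕ) :
    lcoef α n = (∏ i ∈ Finset.range n, ((i : ℝ) + 1 - α)) / n.factorial := by
  induction n with
  | zero => simp [lcoef, g_zero]
  | succ n ih =>
    have h : lcoef α (n + 1) = lcoef α n + g α (n + 1) := by
      unfold lcoef; rw [Finset.sum_range_succ]
    have h1 : (n.factorial : ℝ) ≠ 0 := Nat.cast_ne_zero.mpr n.factorial_ne_zero
    rw [h, ih, g_succ, Finset.prod_range_succ, Nat.factorial_succ]
    push_cast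
    field_simp
    ring

lemma lcoef_nonneg {α : ℝ} (hα1 : α < 1) (n : ℕ) : 0 ≤ lcoef α n := by
  rw [lcoef_eq]
  exact div_nonneg (prod_nonneg_aux hα1 n) (Nat.cast_nonneg _)

lemma lcoef_zero (α : ℝ) : lcoef α 0 = 1 := by simp [lcoef, g_zero]

theorem stmt_12 (α lam τ : ℝ) (hα0 : 0 < α) (hα1 : α < 1) (hτ : 0 < τ)
    (v : ℕ → ℝ) (n : ℕ) (hn : 1 ≤ n) :
    v n * delta α lam τ v n ≥
      (1 / 2) * Real.exp (-(α / 2) * lam * τ) * delta α (2 * lam) τ (fun k => (v k) ^ 2) n +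
        (Real.exp (-(α / 2) * lam * τ) / (2 * lcoef α 0)) * τ ^ α *
          (delta α lam τ v n) ^ 2 := by
  obtain ⟨F, hFdef⟩ : ∃ F : ℝ, F = Real.exp (α / 2 * lam * τ) := ⟨_, rfl⟩
  obtain ⟨P, hPdef⟩ : ∃ P : ℝ, P = τ ^ (-α) := ⟨_, rfl⟩
  have hFpos : 0 < F := hFdef ▸ Real.exp_pos _
  have hPpos : 0 < P := hPdef ▸ Real.rpow_pos_of_pos hτ _
  have hE : Real.exp (-(α / 2) * lam * τ) = F⁻¹ := by
    rw [hFdef, ← Real.exp_neg]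
    congr 1
    ring
  have hτα : τ ^ α = P⁻¹ := by
    rw [hPdef, ← Real.rpow_neg hτ.le, neg_neg]
  obtain ⟨S, hSdef⟩ : ∃ S : ℝ, S = ∑ k ∈ Finset.range (n + 1),
      Real.exp (-(k : ℝ) * lam * τ) * g α k * v (n - k) := ⟨_, rfl⟩
  obtain ⟨T, hTdef⟩ : ∃ T : ℝ, T = ∑ k ∈ Finset.range (n + 1),
      (Real.exp (-(k : ℝ) * lam * τ)) ^ 2 * g α k * (v (n - k)) ^ 2 := ⟨_, rfl⟩
  have hsumS : (∑ k ∈ Finset.range (n + 1),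
      Real.exp (-((k : ℝ) - α / 2) * lam * τ) * g α k * v (n - k))
      = F * ∑ k ∈ Finset.range (n + 1),
        Real.exp (-(k : ℝ) * lam * τ) * g α k * v (n - k) := by
    rw [Finset.mul_sum]
    refine Finset.sum_congr rfl fun k _ => ?_
    rw [show Real.exp (-((k : ℝ) - α / 2) * lam * τ)
        = F * Real.exp (-(k : ℝ) * lam * τ) from by
      rw [hFdef, ← Real.exp_add]; congr 1; ring]
    ring
  have hS : delta α lam τ v n = P * (F * S) := by
    unfold delta
    rw [← hPdef, hsumS, ← hSdef]
  have hsumT : (∑ k ∈ Finset.range (n + 1),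
      Real.exp (-((k : ℝ) - α / 2) * (2 * lam) * τ) * g α k * (fun k => (v k) ^ 2) (n - k))
      = F ^ 2 * ∑ k ∈ Finset.range (n + 1),
        (Real.exp (-(k : ℝ) * lam * τ)) ^ 2 * g α k * (v (n - k)) ^ 2 := by
    rw [Finset.mul_sum]
    refine Finset.sum_congr rfl fun k _ => ?_
    rw [show Real.exp (-((k : ℝ) - α / 2) * (2 * lam) * τ)
        = F ^ 2 * (Real.exp (-(k : ℝ) * lam * τ)) ^ 2 from by
      rw [hFdef, sq, sq, ← Real.exp_add, ← Real.exp_add, ← Real.exp_add]; congr 1; ring]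
    beta_reduce
    ring
  have hT : delta α (2 * lam) τ (fun k => (v k) ^ 2) n = P * (F ^ 2 * T) := by
    unfold delta
    rw [← hPdef, hsumT, ← hTdef]
  -- split off k = 0
  obtain ⟨S', hS'def⟩ : ∃ S' : ℝ, S' = ∑ k ∈ Finset.range n,
      Real.exp (-((k + 1 : ℕ) : ℝ) * lam * τ) * g α (k + 1) * v (n - (k + 1)) := ⟨_, rfl⟩
  obtain ⟨T', hT'def⟩ : ∃ T' : ℝ, T' = ∑ k ∈ Finset.range n,
      (Real.exp (-((k + 1 : ℕ) : ℝ) * lam * τ)) ^ 2 * g α (k + 1) * (v (n - (k + 1))) ^ 2 :=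
    ⟨_, rfl⟩
  have hSsplit : S = S' + v n := by
    rw [hSdef, Finset.sum_range_succ', hS'def]
    simp [g_zero]
  have hTsplit : T = T' + (v n) ^ 2 := by
    rw [hTdef, Finset.sum_range_succ', hT'def]
    simp [g_zero]
  -- Cauchy–Schwarz bound : S'^2 ≤ -T'
  have hCS : S' ^ 2 ≤ (1 - lcoef α n) * (-T') := by
    have h := Finset.sum_sq_le_sum_mul_sum_of_sq_eq_mul (Finset.range n)
      (r := fun k => (-g α (k + 1)) * Real.exp (-((k + 1 : ℕ) : ℝ) * lam * τ) * v (n - (k + 1)))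
      (f := fun k => -g α (k + 1))
      (g := fun k => (-g α (k + 1)) * (Real.exp (-((k + 1 : ℕ) : ℝ) * lam * τ)) ^ 2
        * (v (n - (k + 1))) ^ 2)
      (fun k _ => by simpa using g_succ_nonpos hα0 hα1 k)
      (fun k _ => by
        have h1 : (0:ℝ) ≤ -g α (k + 1) := by simpa using g_succ_nonpos hα0 hα1 k
        exact mul_nonneg (mul_nonneg h1 (sq_nonneg _)) (sq_nonneg _))
      (fun k _ => by ring)
    have hr : (∑ k ∈ Finset.range n,
        (-g α (k + 1)) * Real.exp (-((k + 1 : ℕ) : ℝ) * lam * τ) * v (n - (k + 1))) = -S' := by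
      rw [hS'def, ← Finset.sum_neg_distrib]
      exact Finset.sum_congr rfl fun k _ => by ring
    have hf : (∑ k ∈ Finset.range n, -g α (k + 1)) = 1 - lcoef α n := by
      have h0 : lcoef α n = (∑ k ∈ Finset.range n, g α (k + 1)) + g α 0 := by
        unfold lcoef; rw [Finset.sum_range_succ']
      rw [Finset.sum_neg_distrib, h0, g_zero]
      ring
    have hgg : (∑ k ∈ Finset.range n, (-g α (k + 1))
        * (Real.exp (-((k + 1 : ℕ) : ℝ) * lam * τ)) ^ 2 * (v (n - (k + 1))) ^ 2) = -T' := by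
      rw [hT'def, ← Finset.sum_neg_distrib]
      exact Finset.sum_congr rfl fun k _ => by ring
    rw [hr, hf, hgg] at h
    calc S' ^ 2 = (-S') ^ 2 := by ring
      _ ≤ (1 - lcoef α n) * (-T') := h
  have hT'nonpos : 0 ≤ -T' := by
    rw [hT'def, ← Finset.sum_neg_distrib]
    refine Finset.sum_nonneg fun k _ => ?_
    have h1 : (0:ℝ) ≤ -g α (k + 1) := by simpa using g_succ_nonpos hα0 hα1 k
    have h2 : (0:ℝ) ≤ (-g α (k + 1)) * (Real.exp (-((k + 1 : ℕ) : ℝ) * lam * τ)) ^ 2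
        * (v (n - (k + 1))) ^ 2 :=
      mul_nonneg (mul_nonneg h1 (sq_nonneg _)) (sq_nonneg _)
    nlinarith
  have hS'sq : S' ^ 2 ≤ -T' := by
    have hl := lcoef_nonneg hα1 n
    nlinarith
  have key : T / 2 + S ^ 2 / 2 ≤ v n * S := by
    rw [hSsplit, hTsplit]
    nlinarith
  rw [hS, hT, hE, lcoef_zero, hτα, ge_iff_le]
  have hrhs : 1 / 2 * F⁻¹ * (P * (F ^ 2 * T)) + F⁻¹ / (2 * 1) * P⁻¹ * (P * (F * S)) ^ 2
      = P * F * (T / 2 + S ^ 2 / 2) := by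
    field_simp
  rw [hrhs]
  calc P * F * (T / 2 + S ^ 2 / 2) ≤ P * F * (v n * S) :=
        mul_le_mul_of_nonneg_left key (by positivity)
    _ = v n * (P * (F * S)) := by ring
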